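/- If γ is an arrow of the Rauzy diagram with involution starting at π and ending at π', then (B_γ*)^{-1} · Θ_π ⊆ Θ_{π'}; that is, the open cone of admissible suspension data Θ is forward-invariant under the inverse transpose of the transition matrix. -/

import Mathlib

open Finset

namespace Rauzy

/-- The alphabet with `2*d` letters. -/
abbrev Letter (d : ℕ) := Fin (2*d)
/-- Positions `1, …, 2d+1` (0-indexed). -/
abbrev Pos (d : ℕ) := Fin (2*d+1)
/-- Combinatorial data: a bijection from `A ∪ {*}` (with `none = *`) to positions. -/
abbrev RPerm (d : ℕ) := Option (Letter d) ≃ Pos d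

/-- A fixed-point-free involution of the alphabet. -/
structure Inv (d : ℕ) where
  i : Letter d → Letter d
  invol : ∀ a, i (i a) = a
  nofix : ∀ a, i a ≠ a

variable {d : ℕ}

/-- Admissibility: neither `i(A_l) ⊆ A_r` nor `i(A_r) ⊆ A_l`. -/
def Admissible (I : Inv d) (π : RPerm d) : Prop :=
  ¬ (∀ a : Letter d, π (some a) < π none → π none < π (some (I.i a))) ∧
  ¬ (∀ a : Letter d, π none < π (some a) → π (some (I.i a)) < π none)

/-- A vector indexed by letters represents a vector indexed by involution classes
iff it is symmetric under the involution. -/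
def Sym (I : Inv d) (v : Letter d → ℝ) : Prop := ∀ a, v (I.i a) = v a

/-- The balance condition defining the hyperplane `S_π`. -/
def Balanced (π : RPerm d) (v : Letter d → ℝ) : Prop :=
  ∑ a ∈ univ.filter (fun a => π (some a) < π none), v a
    = ∑ a ∈ univ.filter (fun a => π none < π (some a)), v a

def Positive (v : Letter d → ℝ) : Prop := ∀ a, 0 < v a

/-- Membership in `S_π` (as a vector in `ℝ^{A/i}`, in letter coordinates). -/
def MemS (I : Inv d) (π : RPerm d) (v : Letter d → ℝ) : Prop := Sym I v ∧ Balanced π v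

/-- The open cone `Θ_π` of admissible suspension data. -/
def MemTheta (I : Inv d) (π : RPerm d) (τ : Letter d → ℝ) : Prop :=
  MemS I π τ ∧
  (∀ k : Pos d, π none < k → (k : ℕ) < 2*d →
    0 < ∑ a ∈ univ.filter (fun a => π none < π (some a) ∧ π (some a) ≤ k), τ a) ∧
  (∀ k : Pos d, 0 < (k : ℕ) → k < π none →
    ∑ a ∈ univ.filter (fun a => k ≤ π (some a) ∧ π (some a) < π none), τ a < 0)

/-- The cone `Θ'_π`: non-strict inequalities, excluding `0`. -/
def MemTheta' (I : Inv d) (π : RPerm d) (τ : Letter d → ℝ) : Prop :=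
  MemS I π τ ∧ τ ≠ 0 ∧
  (∀ k : Pos d, π none < k → (k : ℕ) < 2*d →
    0 ≤ ∑ a ∈ univ.filter (fun a => π none < π (some a) ∧ π (some a) ≤ k), τ a) ∧
  (∀ k : Pos d, 0 < (k : ℕ) → k < π none →
    ∑ a ∈ univ.filter (fun a => k ≤ π (some a) ∧ π (some a) < π none), τ a ≤ 0)

/-- The linear operator `Ω(π)` applied to a vector:
`(Ω(π)·v)_α = Σ_{π(ξ)>π(i(α))} v_ξ − Σ_{π(ξ)<π(α)} v_ξ`. -/
def omegaApply (I : Inv d) (π : RPerm d) (v : Letter d → ℝ) (a : Letter d) : ℝ :=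
  (∑ x ∈ univ.filter (fun x => π (some (I.i a)) < π (some x)), v x)
  - ∑ x ∈ univ.filter (fun x => π (some x) < π (some a)), v x

/-- The left operation: the rightmost letter `β` is inserted immediately after `i(α)`,
where `α` is the leftmost letter; both permutations are admissible. -/
def LeftOpTo (I : Inv d) (π π' : RPerm d) : Prop :=
  Admissible I π ∧ Admissible I π' ∧
  ∃ α β : Letter d, π (some α) = 0 ∧ π (some β) = Fin.last (2*d) ∧ β ≠ I.i α ∧
    (∀ x, π x ≤ π (some (I.i α)) → π' x = π x) ∧
    ((π' (some β) : ℕ) = (π (some (I.i α)) : ℕ) + 1) ∧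
    (∀ x, x ≠ some β → π (some (I.i α)) < π x → (π' x : ℕ) = (π x : ℕ) + 1)

/-- The right operation: the leftmost letter `α` is inserted immediately before `i(β)`,
where `β` is the rightmost letter; both permutations are admissible. -/
def RightOpTo (I : Inv d) (π π' : RPerm d) : Prop :=
  Admissible I π ∧ Admissible I π' ∧
  ∃ α β : Letter d, π (some α) = 0 ∧ π (some β) = Fin.last (2*d) ∧ α ≠ I.i β ∧
    (∀ x, π (some (I.i β)) ≤ π x → π' x = π x) ∧
    ((π' (some α) : ℕ) + 1 = (π (some (I.i β)) : ℕ)) ∧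
    (∀ x, x ≠ some α → π x < π (some (I.i β)) → (π' x : ℕ) + 1 = (π x : ℕ))

/-- An arrow of the Rauzy diagram with involution, with its winner and loser. -/
structure Arrow (d : ℕ) (I : Inv d) where
  src : RPerm d
  dst : RPerm d
  winner : Letter d
  loser : Letter d
  ok : (LeftOpTo I src dst ∧ src (some winner) = 0 ∧ src (some loser) = Fin.last (2*d))
     ∨ (RightOpTo I src dst ∧ src (some loser) = 0 ∧ src (some winner) = Fin.last (2*d))

/-- A list of arrows is a path if consecutive arrows match. -/
def IsPathList (I : Inv d) (l : List (Arrow d I)) : Prop :=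
  l.Chain' (fun a b => a.dst = b.src)

/-- `B_γ` for an arrow `γ`: `B·e_ξ̲ = e_ξ̲` for `ξ̲ ≠ α̲` and `B·e_α̲ = e_α̲ + e_β̲`
(winner `α`, loser `β`), acting on vectors in letter coordinates. -/
def arrowB (I : Inv d) (a : Arrow d I) (v : Letter d → ℝ) : Letter d → ℝ :=
  fun x => v x + (if x = a.loser ∨ x = I.i a.loser then v a.winner else 0)

/-- The transpose `B*_γ` for an arrow `γ`. -/
def arrowBt (I : Inv d) (a : Arrow d I) (v : Letter d → ℝ) : Letter d → ℝ :=
  fun x => v x + (if x = a.winner ∨ x = I.i a.winner then v a.loser else 0)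

/-- The inverse transpose `(B*_γ)⁻¹` for an arrow `γ`. -/
def arrowBtInv (I : Inv d) (a : Arrow d I) (v : Letter d → ℝ) : Letter d → ℝ :=
  fun x => v x - (if x = a.winner ∨ x = I.i a.winner then v a.loser else 0)

/-- `B_γ = B_{γ_n} ⋯ B_{γ_1}` for a path `γ = γ_1 … γ_n`. -/
def pathB (I : Inv d) (l : List (Arrow d I)) (v : Letter d → ℝ) : Letter d → ℝ :=
  l.foldl (fun w a => arrowB I a w) v

/-- `B*_γ = B*_{γ_1} ⋯ B*_{γ_n}`. -/
def pathBt (I : Inv d) (l : List (Arrow d I)) (v : Letter d → ℝ) : Letter d → ℝ :=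
  l.foldr (fun a w => arrowBt I a w) v

/-- `(B*_γ)⁻¹ = (B*_{γ_n})⁻¹ ⋯ (B*_{γ_1})⁻¹`. -/
def pathBtInv (I : Inv d) (l : List (Arrow d I)) (v : Letter d → ℝ) : Letter d → ℝ :=
  l.foldl (fun w a => arrowBtInv I a w) v

/-- The canonical basis vector of `ℝ^{A/i}` for the class of `y`, in letter coordinates. -/
def classBasis (I : Inv d) (y : Letter d) : Letter d → ℝ :=
  fun x => if x = y ∨ x = I.i y then 1 else 0

/-- A path is positive if all the entries of the matrix `B_γ` (over classes) are positive. -/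
def PositivePath (I : Inv d) (l : List (Arrow d I)) : Prop :=
  ∀ x y : Letter d, 0 < pathB I l (classBasis I y) x

/-- A path is complete if every involution class is the winner of some arrow. -/
def CompletePath (I : Inv d) (l : List (Arrow d I)) : Prop :=
  ∀ x : Letter d, ∃ a ∈ l, a.winner = x ∨ a.winner = I.i x

/-- A `k`-complete path is a concatenation of `k` complete paths. -/
def KComplete (I : Inv d) (k : ℕ) (l : List (Arrow d I)) : Prop :=
  ∃ ls : List (List (Arrow d I)), ls.length = k ∧ l = ls.flatten ∧ ∀ s ∈ ls, CompletePath I s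

/-- Invariance of a set of permutations under the left and right operations. -/
def OpInvariant (I : Inv d) (R : Set (RPerm d)) : Prop :=
  ∀ π ∈ R, ∀ π', (LeftOpTo I π π' ∨ RightOpTo I π π') → π' ∈ R

/-- A Rauzy class with involution: a minimal nonempty invariant set of admissible
permutations in which every involution class wins some arrow. -/
def IsRauzyClass (I : Inv d) (R : Set (RPerm d)) : Prop :=
  R.Nonempty ∧ (∀ π ∈ R, Admissible I π) ∧ OpInvariant I R ∧
  (∀ R' ⊆ R, R'.Nonempty → OpInvariant I R' → R' = R) ∧
  (∀ x : Letter d, ∃ a : Arrow d I, a.src ∈ R ∧ a.dst ∈ R ∧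
    (a.winner = x ∨ a.winner = I.i x))

/-- A permutation is irreducible if it belongs to a Rauzy class with involution. -/
def Irreducible (I : Inv d) (π : RPerm d) : Prop :=
  ∃ R, IsRauzyClass I R ∧ π ∈ R

/-- The vector `v_π = Σ_{π(x)<π(*)} e_x̲ − Σ_{π(x)>π(*)} e_x̲`, in letter coordinates. -/
def vpi (I : Inv d) (π : RPerm d) (x : Letter d) : ℝ :=
  (if π (some x) < π none then 1 else -1) + (if π (some (I.i x)) < π none then 1 else -1)


def Sg (π : RPerm d) (τ : Letter d → ℝ) (j k : ℕ) : ℝ :=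
  ∑ a : Letter d, if j ≤ (π (some a)).val ∧ (π (some a)).val ≤ k then τ a else 0

lemma Sg_zero (π : RPerm d) (τ : Letter d → ℝ) {j k : ℕ} (h : k < j) : Sg π τ j k = 0 := by
  refine Finset.sum_eq_zero fun a _ => if_neg ?_
  rintro ⟨h1, h2⟩; omega

lemma Sg_split (π : RPerm d) (τ : Letter d → ℝ) {j m k : ℕ} (h1 : j ≤ m+1) (h2 : m ≤ k) :
    Sg π τ j k = Sg π τ j m + Sg π τ (m+1) k := by
  unfold Sg
  rw [← Finset.sum_add_distrib]
  refine Finset.sum_congr rfl fun a _ => ?_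
  split_ifs <;> (first | ring1 | (exfalso; omega))

lemma Sg_single (π : RPerm d) (τ : Letter d → ℝ) {c : Letter d} {m : ℕ}
    (hc : (π (some c)).val = m) : Sg π τ m m = τ c := by
  unfold Sg
  rw [Finset.sum_eq_single_of_mem c (Finset.mem_univ c)]
  · rw [if_pos ⟨le_of_eq hc.symm, le_of_eq hc⟩]
  · intro b _ hb
    refine if_neg ?_
    rintro ⟨h1, h2⟩
    exact hb (Option.some.inj (π.injective (Fin.val_injective (show (π (some b)).val = (π (some c)).val by omega))))

lemma Sg_star (π : RPerm d) (τ : Letter d → ℝ) {m : ℕ} (hm : (π none).val = m) :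
    Sg π τ m m = 0 := by
  refine Finset.sum_eq_zero fun a _ => if_neg ?_
  rintro ⟨h1, h2⟩
  exact Option.some_ne_none _ (π.injective (Fin.val_injective (show (π (some a)).val = (π none).val by omega)))

lemma Sg_sub (I : Inv d) (π : RPerm d) (τ : Letter d → ℝ) (w l : Letter d)
    (hw : I.i w ≠ w) (j k : ℕ) :
    Sg π (fun x => τ x - if x = w ∨ x = I.i w then τ l else 0) j k
      = Sg π τ j k
        - (if j ≤ (π (some w)).val ∧ (π (some w)).val ≤ k then τ l else 0)
        - (if j ≤ (π (some (I.i w))).val ∧ (π (some (I.i w))).val ≤ k then τ l else 0) := by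
  have hA : (if j ≤ (π (some w)).val ∧ (π (some w)).val ≤ k then τ l else 0)
      = ∑ a : Letter d, if a = w then (if j ≤ (π (some a)).val ∧ (π (some a)).val ≤ k then τ l else 0) else 0 := by
    rw [Fintype.sum_ite_eq' w (fun a => if j ≤ (π (some a)).val ∧ (π (some a)).val ≤ k then τ l else 0)]
  have hB : (if j ≤ (π (some (I.i w))).val ∧ (π (some (I.i w))).val ≤ k then τ l else 0)
      = ∑ a : Letter d, if a = I.i w then (if j ≤ (π (some a)).val ∧ (π (some a)).val ≤ k then τ l else 0) else 0 := by
    rw [Fintype.sum_ite_eq' (I.i w) (fun a => if j ≤ (π (some a)).val ∧ (π (some a)).val ≤ k then τ l else 0)]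
  rw [hA, hB]; unfold Sg
  rw [← Finset.sum_sub_distrib, ← Finset.sum_sub_distrib]
  refine Finset.sum_congr rfl fun a _ => ?_
  dsimp only
  by_cases h1 : a = w
  · have h2 : ¬ a = I.i w := by rw [h1]; exact fun h => hw h.symm
    rw [if_pos (Or.inl h1), if_pos h1, if_neg h2]
    split_ifs <;> ring
  · by_cases h2 : a = I.i w
    · rw [if_pos (Or.inr h2), if_neg h1, if_pos h2]
      split_ifs <;> ring
    · have hno : ¬ (a = w ∨ a = I.i w) := by rintro (h | h); exacts [h1 h, h2 h]
      rw [if_neg hno, if_neg h1, if_neg h2]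
      split_ifs <;> ring

lemma Sg_left (π π' : RPerm d) (σ : Letter d → ℝ) (l : Letter d) (q : ℕ)
    (hq2 : q + 1 ≤ 2*d)
    (hvl : (π (some l)).val = 2*d)
    (hv' : ∀ a : Letter d, (π' (some a)).val
      = if a = l then q+1 else if (π (some a)).val ≤ q then (π (some a)).val
        else (π (some a)).val + 1)
    {j k : ℕ} (hk : k ≤ 2*d) :
    Sg π' σ j k = Sg π σ j (min k q)
      + (if j ≤ q+1 ∧ q+1 ≤ k then σ l else 0)
      + Sg π σ (max j (q+2) - 1) (k-1) := by
  have hB : (if j ≤ q+1 ∧ q+1 ≤ k then σ l else 0)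
      = ∑ a : Letter d, if a = l then (if j ≤ q+1 ∧ q+1 ≤ k then σ a else 0) else 0 := by
    rw [Fintype.sum_ite_eq' l (fun a => if j ≤ q+1 ∧ q+1 ≤ k then σ a else 0)]
  rw [hB]; unfold Sg
  rw [← Finset.sum_add_distrib, ← Finset.sum_add_distrib]
  refine Finset.sum_congr rfl fun a _ => ?_
  have hva : (π (some a)).val ≤ 2*d := Fin.is_le _
  rw [hv' a]
  by_cases h1 : a = l
  · rw [if_pos h1, if_pos h1, h1, hvl]
    split_ifs <;> (first | ring1 | (exfalso; omega))
  · rw [if_neg h1, if_neg h1]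
    split_ifs <;> (first | ring1 | (exfalso; omega))

lemma Sg_right (π π' : RPerm d) (σ : Letter d → ℝ) (l : Letter d) (q : ℕ)
    (hq1 : 1 ≤ q)
    (hvl : (π (some l)).val = 0)
    (hmin : ∀ a : Letter d, a ≠ l → 1 ≤ (π (some a)).val)
    (hv' : ∀ a : Letter d, (π' (some a)).val
      = if a = l then q-1 else if q ≤ (π (some a)).val then (π (some a)).val
        else (π (some a)).val - 1)
    {j k : ℕ} :
    Sg π' σ j k = (if j ≤ q-1 ∧ q-1 ≤ k then σ l else 0)
      + Sg π σ (j+1) (min (k+1) (q-1))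
      + Sg π σ (max j q) k := by
  have hB : (if j ≤ q-1 ∧ q-1 ≤ k then σ l else 0)
      = ∑ a : Letter d, if a = l then (if j ≤ q-1 ∧ q-1 ≤ k then σ a else 0) else 0 := by
    rw [Fintype.sum_ite_eq' l (fun a => if j ≤ q-1 ∧ q-1 ≤ k then σ a else 0)]
  rw [hB]; unfold Sg
  rw [← Finset.sum_add_distrib, ← Finset.sum_add_distrib]
  refine Finset.sum_congr rfl fun a _ => ?_
  rw [hv' a]
  by_cases h1 : a = l
  · rw [if_pos h1, if_pos h1, h1, hvl]
    split_ifs <;> (first | ring1 | (exfalso; omega))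
  · have hm := hmin a h1
    rw [if_neg h1, if_neg h1]
    split_ifs <;> (first | ring1 | (exfalso; omega))

lemma sum_pos_eq (π : RPerm d) (τ : Letter d → ℝ) (k : Pos d) :
    (∑ a ∈ univ.filter (fun a => π none < π (some a) ∧ π (some a) ≤ k), τ a)
      = Sg π τ ((π none).val + 1) k.val := by
  rw [Finset.sum_filter]; unfold Sg
  refine Finset.sum_congr rfl fun a _ => ?_
  by_cases h : π none < π (some a) ∧ π (some a) ≤ k
  · rw [if_pos h, if_pos ⟨by have := h.1; rw [Fin.lt_def] at this; omega, h.2⟩]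
  · rw [if_neg h, if_neg (fun hc => h ⟨Fin.lt_def.mpr (by omega), hc.2⟩)]

lemma sum_neg_eq (π : RPerm d) (τ : Letter d → ℝ) (hp : 1 ≤ (π none).val) (k : Pos d) :
    (∑ a ∈ univ.filter (fun a => k ≤ π (some a) ∧ π (some a) < π none), τ a)
      = Sg π τ k.val ((π none).val - 1) := by
  rw [Finset.sum_filter]; unfold Sg
  refine Finset.sum_congr rfl fun a _ => ?_
  by_cases h : k ≤ π (some a) ∧ π (some a) < π none
  · rw [if_pos h, if_pos ⟨h.1, by have := h.2; rw [Fin.lt_def] at this; omega⟩]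
  · rw [if_neg h, if_neg (fun hc => h ⟨hc.1, Fin.lt_def.mpr (by omega)⟩)]

lemma balanced_iff (π : RPerm d) (τ : Letter d → ℝ) (hp : 1 ≤ (π none).val) :
    Balanced π τ ↔ Sg π τ 0 ((π none).val - 1) = Sg π τ ((π none).val + 1) (2*d) := by
  have h1 : (∑ a ∈ univ.filter (fun a => π (some a) < π none), τ a)
      = Sg π τ 0 ((π none).val - 1) := by
    rw [Finset.sum_filter]; unfold Sg
    refine Finset.sum_congr rfl fun a _ => ?_
    by_cases h : π (some a) < π none
    · rw [if_pos h, if_pos ⟨Nat.zero_le _, by have := h; rw [Fin.lt_def] at this; omega⟩]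
    · rw [if_neg h, if_neg (fun hc => h (Fin.lt_def.mpr (by omega)))]
  have h2 : (∑ a ∈ univ.filter (fun a => π none < π (some a)), τ a)
      = Sg π τ ((π none).val + 1) (2*d) := by
    rw [Finset.sum_filter]; unfold Sg
    refine Finset.sum_congr rfl fun a _ => ?_
    have hva : (π (some a)).val ≤ 2*d := Fin.is_le _
    by_cases h : π none < π (some a)
    · rw [if_pos h, if_pos ⟨by have := h; rw [Fin.lt_def] at this; omega, hva⟩]
    · rw [if_neg h, if_neg (fun hc => h (Fin.lt_def.mpr (by omega)))]
  unfold Balanced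
  rw [h1, h2]

lemma adm_bounds (I : Inv d) (π : RPerm d) (h : Admissible I π) :
    2 ≤ (π none).val ∧ (π none).val + 2 ≤ 2*d := by
  obtain ⟨h1, h2⟩ := h
  push_neg at h1 h2
  obtain ⟨a, ha1, ha2⟩ := h1
  obtain ⟨b, hb1, hb2⟩ := h2
  rw [Fin.lt_def] at ha1 hb1
  rw [Fin.le_def] at ha2 hb2
  have hane : (π (some (I.i a))).val ≠ (π none).val :=
    fun hc => Option.some_ne_none _ (π.injective (Fin.val_injective hc))
  have hbne : (π (some (I.i b))).val ≠ (π none).val :=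
    fun hc => Option.some_ne_none _ (π.injective (Fin.val_injective hc))
  have haa : (π (some (I.i a))).val ≠ (π (some a)).val :=
    fun hc => I.nofix a (Option.some.inj (π.injective (Fin.val_injective hc)))
  have hbb : (π (some (I.i b))).val ≠ (π (some b)).val :=
    fun hc => I.nofix b (Option.some.inj (π.injective (Fin.val_injective hc)))
  have hia : (π (some (I.i b))).val ≤ 2*d := Fin.is_le _
  have hib : (π (some b)).val ≤ 2*d := Fin.is_le _
  omega

lemma left_main (I : Inv d) (π π' : RPerm d) (τ : Letter d → ℝ)
    (hL : LeftOpTo I π π') (w l : Letter d)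
    (hw : π (some w) = 0) (hl : π (some l) = Fin.last (2*d))
    (hτ : MemTheta I π τ) :
    MemTheta I π' (fun x => τ x - if x = w ∨ x = I.i w then τ l else 0) := by
  obtain ⟨hadm, hadm', α, β, hα, hβ, hβne, hkeep, hins, hshift⟩ := hL
  have hαw : α = w := Option.some.inj (π.injective (hα.trans hw.symm))
  have hβl : β = l := Option.some.inj (π.injective (hβ.trans hl.symm))
  rw [hαw, hβl] at hβne
  rw [hαw] at hkeep
  rw [hαw, hβl] at hins
  rw [hαw, hβl] at hshift
  obtain ⟨hp2, hp2d⟩ := adm_bounds I π hadm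
  have vinj : ∀ x y : Option (Letter d), (π x).val = (π y).val → x = y :=
    fun x y h => π.injective (Fin.val_injective h)
  have hvw : (π (some w)).val = 0 := by rw [hw]; rfl
  have hvl : (π (some l)).val = 2*d := by rw [hl]; rfl
  have hiwne : I.i w ≠ w := I.nofix w
  have hq1 : 1 ≤ (π (some (I.i w))).val := by
    rcases Nat.eq_zero_or_pos (π (some (I.i w))).val with h0 | h
    · exact absurd (Option.some.inj (vinj _ _ (h0.trans hvw.symm))) hiwne
    · exact h
  have hq2 : (π (some (I.i w))).val + 1 ≤ 2*d := by
    have hle : (π (some (I.i w))).val ≤ 2*d := Fin.is_le _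
    rcases eq_or_lt_of_le hle with h0 | h
    · exact absurd (Option.some.inj (vinj _ _ (h0.trans hvl.symm))).symm hβne
    · omega
  have hqp : (π (some (I.i w))).val ≠ (π none).val := fun hc => Option.some_ne_none _ (vinj _ _ hc)
  have hlw : l ≠ w := fun hc => by rw [hc, hvw] at hvl; omega
  have hlno : ¬ (l = w ∨ l = I.i w) := by rintro (h | h); exacts [hlw h, hβne h]
  have hv' : ∀ a : Letter d, (π' (some a)).val
      = if a = l then (π (some (I.i w))).val + 1
        else if (π (some a)).val ≤ (π (some (I.i w))).val then (π (some a)).val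
        else (π (some a)).val + 1 := by
    intro a
    by_cases h1 : a = l
    · rw [if_pos h1, h1, hins]
    · rw [if_neg h1]
      by_cases h2 : (π (some a)).val ≤ (π (some (I.i w))).val
      · rw [if_pos h2, hkeep (some a) (Fin.le_def.mpr h2)]
      · rw [if_neg h2]
        exact hshift (some a) (fun hc => h1 (Option.some.inj hc)) (Fin.lt_def.mpr (by omega))
  have hs' : (π' none).val
      = if (π none).val ≤ (π (some (I.i w))).val then (π none).val else (π none).val + 1 := by
    by_cases h2 : (π none).val ≤ (π (some (I.i w))).val
    · rw [if_pos h2, hkeep none (Fin.le_def.mpr h2)]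
    · rw [if_neg h2]
      exact hshift none (fun hc => by cases hc) (Fin.lt_def.mpr (by omega))
  obtain ⟨⟨hsym, hbal0⟩, hposF, hnegF⟩ := hτ
  have hp1 : 1 ≤ (π none).val := by omega
  have hbal : Sg π τ 0 ((π none).val - 1) = Sg π τ ((π none).val + 1) (2*d) :=
    (balanced_iff π τ hp1).mp hbal0
  have hpos : ∀ K : ℕ, (π none).val < K → K < 2*d → 0 < Sg π τ ((π none).val + 1) K := by
    intro K h1 h2
    have h3 := hposF ⟨K, by omega⟩ (Fin.lt_def.mpr h1) h2
    rwa [sum_pos_eq] at h3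
  have hneg : ∀ K : ℕ, 0 < K → K < (π none).val → Sg π τ K ((π none).val - 1) < 0 := by
    intro K h1 h2
    have h3 := hnegF ⟨K, by omega⟩ h1 (Fin.lt_def.mpr h2)
    rwa [sum_neg_eq π τ hp1] at h3
  have hSw : Sg π τ 0 0 = τ w := Sg_single π τ hvw
  have hSl : Sg π τ (2*d) (2*d) = τ l := Sg_single π τ hvl
  have hSq : Sg π τ ((π (some (I.i w))).val) ((π (some (I.i w))).val) = τ w :=
    (Sg_single π τ rfl).trans (hsym w)
  have hτl : (fun x => τ x - if x = w ∨ x = I.i w then τ l else 0) l = τ l := by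
    dsimp only; rw [if_neg hlno]; ring
  -- splitting equations
  have c2 : Sg π τ ((π none).val + 1) (2*d)
      = Sg π τ ((π none).val + 1) (2*d - 1) + τ l := by
    rw [Sg_split π τ (j := (π none).val + 1) (m := 2*d - 1) (k := 2*d) (by omega) (by omega)]
    have e : 2*d - 1 + 1 = 2*d := by omega
    rw [e, hSl]
  have c3 : Sg π τ 0 ((π none).val - 1) = τ w + Sg π τ 1 ((π none).val - 1) := by
    rw [Sg_split π τ (j := 0) (m := 0) (k := (π none).val - 1) (by omega) (by omega), hSw]
  refine ⟨⟨?_, ?_⟩, ?_, ?_⟩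
  · -- Sym
    intro a
    have hcond : (I.i a = w ∨ I.i a = I.i w) ↔ (a = w ∨ a = I.i w) := by
      constructor
      · rintro (h | h)
        · right; rw [← h, I.invol]
        · left; have := congrArg I.i h; rwa [I.invol, I.invol] at this
      · rintro (h | h)
        · right; rw [h]
        · left; rw [h, I.invol]
    dsimp only
    rw [hsym a, if_congr hcond rfl rfl]
  · -- Balanced
    have hp'1 : 1 ≤ (π' none).val := by rw [hs']; split_ifs <;> omega
    rw [balanced_iff π' _ hp'1]
    rcases Nat.lt_or_ge (π none).val ((π (some (I.i w))).val) with hpq | hpq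
    · -- p < q
      have hs'' : (π' none).val = (π none).val := by rw [hs', if_pos (by omega)]
      rw [hs'']
      rw [Sg_left π π' _ l _ hq2 hvl hv'
        (show (π none).val - 1 ≤ 2*d by omega)]
      rw [Sg_left π π' _ l _ hq2 hvl hv' (show 2*d ≤ 2*d from le_refl _)]
      have e1 : min ((π none).val - 1) ((π (some (I.i w))).val) = (π none).val - 1 := by omega
      have e2 : max 0 ((π (some (I.i w))).val + 2) - 1 = (π (some (I.i w))).val + 1 := by omega
      have e3 : min (2*d) ((π (some (I.i w))).val) = (π (some (I.i w))).val := by omega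
      have e4 : max ((π none).val + 1) ((π (some (I.i w))).val + 2) - 1
          = (π (some (I.i w))).val + 1 := by omega
      rw [e1, e2, e3, e4]
      rw [if_neg (by omega : ¬ (0 ≤ (π (some (I.i w))).val + 1 ∧ (π (some (I.i w))).val + 1 ≤ (π none).val - 1))]
      rw [if_pos (by omega : (π none).val + 1 ≤ (π (some (I.i w))).val + 1 ∧ (π (some (I.i w))).val + 1 ≤ 2*d)]
      rw [Sg_zero π _ (by omega : (π none).val - 1 - 1 < (π (some (I.i w))).val + 1)]
      rw [if_neg hlno]
      rw [Sg_sub I π τ w l hiwne, Sg_sub I π τ w l hiwne, Sg_sub I π τ w l hiwne]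
      rw [hvw]
      rw [if_pos (by omega : 0 ≤ (0:ℕ) ∧ 0 ≤ (π none).val - 1)]
      rw [if_neg (by omega : ¬ (0 ≤ (π (some (I.i w))).val ∧ (π (some (I.i w))).val ≤ (π none).val - 1))]
      rw [if_neg (by omega : ¬ ((π none).val + 1 ≤ 0 ∧ (0:ℕ) ≤ (π (some (I.i w))).val))]
      rw [if_pos (by omega : (π none).val + 1 ≤ (π (some (I.i w))).val ∧ (π (some (I.i w))).val ≤ (π (some (I.i w))).val)]
      rw [if_neg (by omega : ¬ ((π (some (I.i w))).val + 1 ≤ 0 ∧ (0:ℕ) ≤ 2*d - 1))]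
      rw [if_neg (by omega : ¬ ((π (some (I.i w))).val + 1 ≤ (π (some (I.i w))).val ∧ (π (some (I.i w))).val ≤ 2*d - 1))]
      have s2 : Sg π τ ((π none).val + 1) (2*d - 1)
          = Sg π τ ((π none).val + 1) ((π (some (I.i w))).val)
            + Sg π τ ((π (some (I.i w))).val + 1) (2*d - 1) :=
        Sg_split π τ (by omega) (by omega)
      linarith [hbal, c2, s2]
    · -- q < p
      have hpq' : (π (some (I.i w))).val < (π none).val := by omega
      have hs'' : (π' none).val = (π none).val + 1 := by rw [hs', if_neg (by omega)]
      rw [hs'']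
      have e0 : (π none).val + 1 - 1 = (π none).val := by omega
      rw [e0]
      rw [Sg_left π π' _ l _ hq2 hvl hv' (show (π none).val ≤ 2*d by omega)]
      rw [Sg_left π π' _ l _ hq2 hvl hv' (show 2*d ≤ 2*d from le_refl _)]
      have e1 : min ((π none).val) ((π (some (I.i w))).val) = (π (some (I.i w))).val := by omega
      have e2 : max 0 ((π (some (I.i w))).val + 2) - 1 = (π (some (I.i w))).val + 1 := by omega
      have e3 : min (2*d) ((π (some (I.i w))).val) = (π (some (I.i w))).val := by omega
      have e4 : max ((π none).val + 1 + 1) ((π (some (I.i w))).val + 2) - 1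
          = (π none).val + 1 := by omega
      rw [e1, e2, e3, e4]
      rw [if_pos (by omega : 0 ≤ (π (some (I.i w))).val + 1 ∧ (π (some (I.i w))).val + 1 ≤ (π none).val)]
      rw [if_neg (by omega : ¬ ((π none).val + 1 + 1 ≤ (π (some (I.i w))).val + 1 ∧ (π (some (I.i w))).val + 1 ≤ 2*d))]
      rw [Sg_zero π _ (by omega : (π (some (I.i w))).val < (π none).val + 1 + 1)]
      rw [if_neg hlno]
      rw [Sg_sub I π τ w l hiwne, Sg_sub I π τ w l hiwne, Sg_sub I π τ w l hiwne]
      rw [hvw]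
      rw [if_pos (by omega : 0 ≤ (0:ℕ) ∧ 0 ≤ (π (some (I.i w))).val)]
      rw [if_pos (by omega : 0 ≤ (π (some (I.i w))).val ∧ (π (some (I.i w))).val ≤ (π (some (I.i w))).val)]
      rw [if_neg (by omega : ¬ ((π (some (I.i w))).val + 1 ≤ 0 ∧ (0:ℕ) ≤ (π none).val - 1))]
      rw [if_neg (by omega : ¬ ((π (some (I.i w))).val + 1 ≤ (π (some (I.i w))).val ∧ (π (some (I.i w))).val ≤ (π none).val - 1))]
      rw [if_neg (by omega : ¬ ((π none).val + 1 ≤ 0 ∧ (0:ℕ) ≤ 2*d - 1))]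
      rw [if_neg (by omega : ¬ ((π none).val + 1 ≤ (π (some (I.i w))).val ∧ (π (some (I.i w))).val ≤ 2*d - 1))]
      have s2 : Sg π τ 0 ((π none).val - 1)
          = Sg π τ 0 ((π (some (I.i w))).val)
            + Sg π τ ((π (some (I.i w))).val + 1) ((π none).val - 1) :=
        Sg_split π τ (by omega) (by omega)
      linarith [hbal, c2, s2]
  · -- positivity family
    intro k hk1 hk2
    rw [sum_pos_eq]
    rw [Fin.lt_def] at hk1
    have hkle : k.val ≤ 2*d := Fin.is_le _
    rcases Nat.lt_or_ge (π none).val ((π (some (I.i w))).val) with hpq | hpq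
    · -- p < q : star fixed
      have hs'' : (π' none).val = (π none).val := by rw [hs', if_pos (by omega)]
      rw [hs''] at hk1 ⊢
      rw [Sg_left π π' _ l _ hq2 hvl hv' (show k.val ≤ 2*d by omega)]
      by_cases hK1 : k.val < (π (some (I.i w))).val
      · have e1 : min k.val ((π (some (I.i w))).val) = k.val := by omega
        have e2 : max ((π none).val + 1) ((π (some (I.i w))).val + 2) - 1
            = (π (some (I.i w))).val + 1 := by omega
        rw [e1, e2]
        rw [if_neg (by omega : ¬ ((π none).val + 1 ≤ (π (some (I.i w))).val + 1 ∧ (π (some (I.i w))).val + 1 ≤ k.val))]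
        rw [Sg_zero π _ (by omega : k.val - 1 < (π (some (I.i w))).val + 1)]
        rw [Sg_sub I π τ w l hiwne, hvw]
        rw [if_neg (by omega : ¬ ((π none).val + 1 ≤ 0 ∧ (0:ℕ) ≤ k.val))]
        rw [if_neg (by omega : ¬ ((π none).val + 1 ≤ (π (some (I.i w))).val ∧ (π (some (I.i w))).val ≤ k.val))]
        have := hpos k.val (by omega) (by omega)
        linarith
      · by_cases hK2 : k.val = (π (some (I.i w))).val
        · -- tricky branch k = q
          have e1 : min k.val ((π (some (I.i w))).val) = (π (some (I.i w))).val := by omega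
          have e2 : max ((π none).val + 1) ((π (some (I.i w))).val + 2) - 1
              = (π (some (I.i w))).val + 1 := by omega
          rw [e1, e2]
          rw [if_neg (by omega : ¬ ((π none).val + 1 ≤ (π (some (I.i w))).val + 1 ∧ (π (some (I.i w))).val + 1 ≤ k.val))]
          rw [Sg_zero π _ (by omega : k.val - 1 < (π (some (I.i w))).val + 1)]
          rw [Sg_sub I π τ w l hiwne, hvw]
          rw [if_neg (by omega : ¬ ((π none).val + 1 ≤ 0 ∧ (0:ℕ) ≤ (π (some (I.i w))).val))]
          rw [if_pos (by omega : (π none).val + 1 ≤ (π (some (I.i w))).val ∧ (π (some (I.i w))).val ≤ (π (some (I.i w))).val)]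
          have c1 : Sg π τ ((π none).val + 1) ((π (some (I.i w))).val)
              = Sg π τ ((π none).val + 1) ((π (some (I.i w))).val - 1) + τ w := by
            rw [Sg_split π τ (j := (π none).val + 1) (m := (π (some (I.i w))).val - 1)
              (k := (π (some (I.i w))).val) (by omega) (by omega)]
            have e : (π (some (I.i w))).val - 1 + 1 = (π (some (I.i w))).val := by omega
            rw [e, hSq]
          have c4 := hneg 1 one_pos (by omega)
          have c5 := hpos (2*d - 1) (by omega) (by omega)
          have c6 : 0 ≤ Sg π τ ((π none).val + 1) ((π (some (I.i w))).val - 1) := by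
            rcases Nat.lt_or_ge ((π none).val + 1) ((π (some (I.i w))).val) with h | h
            · exact le_of_lt (hpos ((π (some (I.i w))).val - 1) (by omega) (by omega))
            · rw [Sg_zero π τ (by omega)]
          linarith [hbal, c1, c2, c3]
        · by_cases hK3 : k.val = (π (some (I.i w))).val + 1
          · have e1 : min k.val ((π (some (I.i w))).val) = (π (some (I.i w))).val := by omega
            have e2 : max ((π none).val + 1) ((π (some (I.i w))).val + 2) - 1
                = (π (some (I.i w))).val + 1 := by omega
            rw [e1, e2]
            rw [if_pos (by omega : (π none).val + 1 ≤ (π (some (I.i w))).val + 1 ∧ (π (some (I.i w))).val + 1 ≤ k.val)]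
            rw [Sg_zero π _ (by omega : k.val - 1 < (π (some (I.i w))).val + 1)]
            rw [if_neg hlno]
            rw [Sg_sub I π τ w l hiwne, hvw]
            rw [if_neg (by omega : ¬ ((π none).val + 1 ≤ 0 ∧ (0:ℕ) ≤ (π (some (I.i w))).val))]
            rw [if_pos (by omega : (π none).val + 1 ≤ (π (some (I.i w))).val ∧ (π (some (I.i w))).val ≤ (π (some (I.i w))).val)]
            have := hpos ((π (some (I.i w))).val) (by omega) (by omega)
            linarith
          · -- k ≥ q + 2
            have hK4 : (π (some (I.i w))).val + 2 ≤ k.val := by omega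
            have e1 : min k.val ((π (some (I.i w))).val) = (π (some (I.i w))).val := by omega
            have e2 : max ((π none).val + 1) ((π (some (I.i w))).val + 2) - 1
                = (π (some (I.i w))).val + 1 := by omega
            rw [e1, e2]
            rw [if_pos (by omega : (π none).val + 1 ≤ (π (some (I.i w))).val + 1 ∧ (π (some (I.i w))).val + 1 ≤ k.val)]
            rw [if_neg hlno]
            rw [Sg_sub I π τ w l hiwne, Sg_sub I π τ w l hiwne, hvw]
            rw [if_neg (by omega : ¬ ((π none).val + 1 ≤ 0 ∧ (0:ℕ) ≤ (π (some (I.i w))).val))]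
            rw [if_pos (by omega : (π none).val + 1 ≤ (π (some (I.i w))).val ∧ (π (some (I.i w))).val ≤ (π (some (I.i w))).val)]
            rw [if_neg (by omega : ¬ ((π (some (I.i w))).val + 1 ≤ 0 ∧ (0:ℕ) ≤ k.val - 1))]
            rw [if_neg (by omega : ¬ ((π (some (I.i w))).val + 1 ≤ (π (some (I.i w))).val ∧ (π (some (I.i w))).val ≤ k.val - 1))]
            have s2 : Sg π τ ((π none).val + 1) (k.val - 1)
                = Sg π τ ((π none).val + 1) ((π (some (I.i w))).val)
                  + Sg π τ ((π (some (I.i w))).val + 1) (k.val - 1) :=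
              Sg_split π τ (by omega) (by omega)
            have := hpos (k.val - 1) (by omega) (by omega)
            linarith
    · -- q < p : star shifted
      have hpq' : (π (some (I.i w))).val < (π none).val := by omega
      have hs'' : (π' none).val = (π none).val + 1 := by rw [hs', if_neg (by omega)]
      rw [hs''] at hk1 ⊢
      rw [Sg_left π π' _ l _ hq2 hvl hv' (show k.val ≤ 2*d by omega)]
      have e1 : min k.val ((π (some (I.i w))).val) = (π (some (I.i w))).val := by omega
      have e2 : max ((π none).val + 1 + 1) ((π (some (I.i w))).val + 2) - 1
          = (π none).val + 1 := by omega
      rw [e1, e2]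
      rw [if_neg (by omega : ¬ ((π none).val + 1 + 1 ≤ (π (some (I.i w))).val + 1 ∧ (π (some (I.i w))).val + 1 ≤ k.val))]
      rw [Sg_zero π _ (by omega : (π (some (I.i w))).val < (π none).val + 1 + 1)]
      rw [Sg_sub I π τ w l hiwne, hvw]
      rw [if_neg (by omega : ¬ ((π none).val + 1 ≤ 0 ∧ (0:ℕ) ≤ k.val - 1))]
      rw [if_neg (by omega : ¬ ((π none).val + 1 ≤ (π (some (I.i w))).val ∧ (π (some (I.i w))).val ≤ k.val - 1))]
      have := hpos (k.val - 1) (by omega) (by omega)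
      linarith
  · -- negativity family
    intro k hk0 hk1
    have hp'1 : 1 ≤ (π' none).val := by rw [hs']; split_ifs <;> omega
    rw [sum_neg_eq π' _ hp'1]
    rw [Fin.lt_def] at hk1
    rcases Nat.lt_or_ge (π none).val ((π (some (I.i w))).val) with hpq | hpq
    · -- p < q
      have hs'' : (π' none).val = (π none).val := by rw [hs', if_pos (by omega)]
      rw [hs''] at hk1 ⊢
      rw [Sg_left π π' _ l _ hq2 hvl hv' (show (π none).val - 1 ≤ 2*d by omega)]
      have e1 : min ((π none).val - 1) ((π (some (I.i w))).val) = (π none).val - 1 := by omega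
      have e2 : max k.val ((π (some (I.i w))).val + 2) - 1 = (π (some (I.i w))).val + 1 := by omega
      rw [e1, e2]
      rw [if_neg (by omega : ¬ (k.val ≤ (π (some (I.i w))).val + 1 ∧ (π (some (I.i w))).val + 1 ≤ (π none).val - 1))]
      rw [Sg_zero π _ (by omega : (π none).val - 1 - 1 < (π (some (I.i w))).val + 1)]
      rw [Sg_sub I π τ w l hiwne, hvw]
      rw [if_neg (by omega : ¬ (k.val ≤ 0 ∧ (0:ℕ) ≤ (π none).val - 1))]
      rw [if_neg (by omega : ¬ (k.val ≤ (π (some (I.i w))).val ∧ (π (some (I.i w))).val ≤ (π none).val - 1))]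
      have := hneg k.val (by omega) (by omega)
      linarith
    · -- q < p
      have hpq' : (π (some (I.i w))).val < (π none).val := by omega
      have hs'' : (π' none).val = (π none).val + 1 := by rw [hs', if_neg (by omega)]
      rw [hs''] at hk1 ⊢
      have e0 : (π none).val + 1 - 1 = (π none).val := by omega
      rw [e0]
      rw [Sg_left π π' _ l _ hq2 hvl hv' (show (π none).val ≤ 2*d by omega)]
      by_cases hK1 : k.val ≤ (π (some (I.i w))).val
      · have e1 : min ((π none).val) ((π (some (I.i w))).val) = (π (some (I.i w))).val := by omega
        have e2 : max k.val ((π (some (I.i w))).val + 2) - 1 = (π (some (I.i w))).val + 1 := by omega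
        rw [e1, e2]
        rw [if_pos (by omega : k.val ≤ (π (some (I.i w))).val + 1 ∧ (π (some (I.i w))).val + 1 ≤ (π none).val)]
        rw [if_neg hlno]
        rw [Sg_sub I π τ w l hiwne, Sg_sub I π τ w l hiwne, hvw]
        rw [if_neg (by omega : ¬ (k.val ≤ 0 ∧ (0:ℕ) ≤ (π (some (I.i w))).val))]
        rw [if_pos (by omega : k.val ≤ (π (some (I.i w))).val ∧ (π (some (I.i w))).val ≤ (π (some (I.i w))).val)]
        rw [if_neg (by omega : ¬ ((π (some (I.i w))).val + 1 ≤ 0 ∧ (0:ℕ) ≤ (π none).val - 1))]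
        rw [if_neg (by omega : ¬ ((π (some (I.i w))).val + 1 ≤ (π (some (I.i w))).val ∧ (π (some (I.i w))).val ≤ (π none).val - 1))]
        have s2 : Sg π τ k.val ((π none).val - 1)
            = Sg π τ k.val ((π (some (I.i w))).val)
              + Sg π τ ((π (some (I.i w))).val + 1) ((π none).val - 1) :=
          Sg_split π τ (by omega) (by omega)
        have := hneg k.val (by omega) (by omega)
        linarith
      · by_cases hK2 : k.val = (π (some (I.i w))).val + 1
        · -- tricky branch k = q + 1
          have e1 : min ((π none).val) ((π (some (I.i w))).val) = (π (some (I.i w))).val := by omega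
          have e2 : max k.val ((π (some (I.i w))).val + 2) - 1 = (π (some (I.i w))).val + 1 := by omega
          rw [e1, e2]
          rw [Sg_zero π _ (by omega : (π (some (I.i w))).val < k.val)]
          rw [if_pos (by omega : k.val ≤ (π (some (I.i w))).val + 1 ∧ (π (some (I.i w))).val + 1 ≤ (π none).val)]
          rw [if_neg hlno]
          rw [Sg_sub I π τ w l hiwne, hvw]
          rw [if_neg (by omega : ¬ ((π (some (I.i w))).val + 1 ≤ 0 ∧ (0:ℕ) ≤ (π none).val - 1))]
          rw [if_neg (by omega : ¬ ((π (some (I.i w))).val + 1 ≤ (π (some (I.i w))).val ∧ (π (some (I.i w))).val ≤ (π none).val - 1))]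
          have c1 : Sg π τ ((π (some (I.i w))).val) ((π none).val - 1)
              = τ w + Sg π τ ((π (some (I.i w))).val + 1) ((π none).val - 1) := by
            rw [Sg_split π τ (j := (π (some (I.i w))).val) (m := (π (some (I.i w))).val)
              (k := (π none).val - 1) (by omega) (by omega), hSq]
          have c4 := hneg 1 one_pos (by omega)
          have c5 := hpos (2*d - 1) (by omega) (by omega)
          have c6 := hneg ((π (some (I.i w))).val) (by omega) (by omega)
          linarith [hbal, c1, c2, c3]
        · -- k ≥ q + 2
          have hK4 : (π (some (I.i w))).val + 2 ≤ k.val := by omega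
          have e1 : min ((π none).val) ((π (some (I.i w))).val) = (π (some (I.i w))).val := by omega
          have e2 : max k.val ((π (some (I.i w))).val + 2) - 1 = k.val - 1 := by omega
          rw [e1, e2]
          rw [Sg_zero π _ (by omega : (π (some (I.i w))).val < k.val)]
          rw [if_neg (by omega : ¬ (k.val ≤ (π (some (I.i w))).val + 1 ∧ (π (some (I.i w))).val + 1 ≤ (π none).val))]
          rw [Sg_sub I π τ w l hiwne, hvw]
          rw [if_neg (by omega : ¬ (k.val - 1 ≤ 0 ∧ (0:ℕ) ≤ (π none).val - 1))]
          rw [if_neg (by omega : ¬ (k.val - 1 ≤ (π (some (I.i w))).val ∧ (π (some (I.i w))).val ≤ (π none).val - 1))]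
          have := hneg (k.val - 1) (by omega) (by omega)
          linarith

lemma right_main (I : Inv d) (π π' : RPerm d) (τ : Letter d → ℝ)
    (hR : RightOpTo I π π') (w l : Letter d)
    (hl : π (some l) = 0) (hw : π (some w) = Fin.last (2*d))
    (hτ : MemTheta I π τ) :
    MemTheta I π' (fun x => τ x - if x = w ∨ x = I.i w then τ l else 0) := by
  obtain ⟨hadm, hadm', α, β, hα, hβ, hαne, hkeep, hins, hshift⟩ := hR
  have hαl : α = l := Option.some.inj (π.injective (hα.trans hl.symm))
  have hβw : β = w := Option.some.inj (π.injective (hβ.trans hw.symm))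
  rw [hαl, hβw] at hαne
  rw [hβw] at hkeep
  rw [hαl, hβw] at hins
  rw [hαl, hβw] at hshift
  obtain ⟨hp2, hp2d⟩ := adm_bounds I π hadm
  have vinj : ∀ x y : Option (Letter d), (π x).val = (π y).val → x = y :=
    fun x y h => π.injective (Fin.val_injective h)
  have hvl : (π (some l)).val = 0 := by rw [hl]; rfl
  have hvw : (π (some w)).val = 2*d := by rw [hw]; rfl
  have hiwne : I.i w ≠ w := I.nofix w
  have hq1 : 1 ≤ (π (some (I.i w))).val := by
    rcases Nat.eq_zero_or_pos (π (some (I.i w))).val with h0 | h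
    · exact absurd (Option.some.inj (vinj _ _ (h0.trans hvl.symm))).symm hαne
    · exact h
  have hq2 : (π (some (I.i w))).val + 1 ≤ 2*d := by
    have hle : (π (some (I.i w))).val ≤ 2*d := Fin.is_le _
    rcases eq_or_lt_of_le hle with h0 | h
    · exact absurd (Option.some.inj (vinj _ _ (h0.trans hvw.symm))) hiwne
    · omega
  have hqp : (π (some (I.i w))).val ≠ (π none).val := fun hc => Option.some_ne_none _ (vinj _ _ hc)
  have hlw : l ≠ w := fun hc => by rw [hc, hvw] at hvl; omega
  have hlno : ¬ (l = w ∨ l = I.i w) := by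
    rintro (h | h); exacts [hlw h, hαne h]
  have hmin : ∀ a : Letter d, a ≠ l → 1 ≤ (π (some a)).val := by
    intro a ha
    rcases Nat.eq_zero_or_pos (π (some a)).val with h0 | h
    · exact absurd (Option.some.inj (vinj _ _ (h0.trans hvl.symm))) ha
    · exact h
  have hv' : ∀ a : Letter d, (π' (some a)).val
      = if a = l then (π (some (I.i w))).val - 1
        else if (π (some (I.i w))).val ≤ (π (some a)).val then (π (some a)).val
        else (π (some a)).val - 1 := by
    intro a
    by_cases h1 : a = l
    · rw [if_pos h1, h1]; omega
    · rw [if_neg h1]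
      by_cases h2 : (π (some (I.i w))).val ≤ (π (some a)).val
      · rw [if_pos h2, hkeep (some a) (Fin.le_def.mpr h2)]
      · rw [if_neg h2]
        have := hshift (some a) (fun hc => h1 (Option.some.inj hc)) (Fin.lt_def.mpr (by omega))
        omega
  have hs' : (π' none).val
      = if (π (some (I.i w))).val ≤ (π none).val then (π none).val else (π none).val - 1 := by
    by_cases h2 : (π (some (I.i w))).val ≤ (π none).val
    · rw [if_pos h2, hkeep none (Fin.le_def.mpr h2)]
    · rw [if_neg h2]
      have := hshift none (fun hc => by cases hc) (Fin.lt_def.mpr (by omega))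
      omega
  obtain ⟨⟨hsym, hbal0⟩, hposF, hnegF⟩ := hτ
  have hp1 : 1 ≤ (π none).val := by omega
  have hbal : Sg π τ 0 ((π none).val - 1) = Sg π τ ((π none).val + 1) (2*d) :=
    (balanced_iff π τ hp1).mp hbal0
  have hpos : ∀ K : ℕ, (π none).val < K → K < 2*d → 0 < Sg π τ ((π none).val + 1) K := by
    intro K h1 h2
    have h3 := hposF ⟨K, by omega⟩ (Fin.lt_def.mpr h1) h2
    rwa [sum_pos_eq] at h3
  have hneg : ∀ K : ℕ, 0 < K → K < (π none).val → Sg π τ K ((π none).val - 1) < 0 := by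
    intro K h1 h2
    have h3 := hnegF ⟨K, by omega⟩ h1 (Fin.lt_def.mpr h2)
    rwa [sum_neg_eq π τ hp1] at h3
  have hSl : Sg π τ 0 0 = τ l := Sg_single π τ hvl
  have hSw : Sg π τ (2*d) (2*d) = τ w := Sg_single π τ hvw
  have hSq : Sg π τ ((π (some (I.i w))).val) ((π (some (I.i w))).val) = τ w :=
    (Sg_single π τ rfl).trans (hsym w)
  have c2 : Sg π τ ((π none).val + 1) (2*d)
      = Sg π τ ((π none).val + 1) (2*d - 1) + τ w := by
    rw [Sg_split π τ (j := (π none).val + 1) (m := 2*d - 1) (k := 2*d) (by omega) (by omega)]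
    have e : 2*d - 1 + 1 = 2*d := by omega
    rw [e, hSw]
  have c3 : Sg π τ 0 ((π none).val - 1) = τ l + Sg π τ 1 ((π none).val - 1) := by
    rw [Sg_split π τ (j := 0) (m := 0) (k := (π none).val - 1) (by omega) (by omega), hSl]
  refine ⟨⟨?_, ?_⟩, ?_, ?_⟩
  · -- Sym
    intro a
    have hcond : (I.i a = w ∨ I.i a = I.i w) ↔ (a = w ∨ a = I.i w) := by
      constructor
      · rintro (h | h)
        · right; rw [← h, I.invol]
        · left; have := congrArg I.i h; rwa [I.invol, I.invol] at this
      · rintro (h | h)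
        · right; rw [h]
        · left; rw [h, I.invol]
    dsimp only
    rw [hsym a, if_congr hcond rfl rfl]
  · -- Balanced
    have hp'1 : 1 ≤ (π' none).val := by rw [hs']; split_ifs <;> omega
    rw [balanced_iff π' _ hp'1]
    rcases Nat.lt_or_ge ((π (some (I.i w))).val) ((π none).val) with hpq | hpq
    · -- q < p
      have hs'' : (π' none).val = (π none).val := by rw [hs', if_pos (by omega)]
      rw [hs'']
      rw [Sg_right π π' _ l _ hq1 hvl hmin hv']
      rw [Sg_right π π' _ l _ hq1 hvl hmin hv']
      rw [if_pos (by omega : 0 ≤ (π (some (I.i w))).val - 1 ∧ (π (some (I.i w))).val - 1 ≤ (π none).val - 1)]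
      rw [if_neg hlno]
      have e1 : min ((π none).val - 1 + 1) ((π (some (I.i w))).val - 1)
          = (π (some (I.i w))).val - 1 := by omega
      have e2 : max 0 ((π (some (I.i w))).val) = (π (some (I.i w))).val := by omega
      rw [e1, e2]
      rw [if_neg (by omega : ¬ ((π none).val + 1 ≤ (π (some (I.i w))).val - 1 ∧ (π (some (I.i w))).val - 1 ≤ 2*d))]
      have e3 : min (2*d + 1) ((π (some (I.i w))).val - 1) = (π (some (I.i w))).val - 1 := by omega
      rw [e3, Sg_zero π _ (by omega : (π (some (I.i w))).val - 1 < (π none).val + 1 + 1)]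
      have e4 : max ((π none).val + 1) ((π (some (I.i w))).val) = (π none).val + 1 := by omega
      rw [e4]
      rw [Sg_sub I π τ w l hiwne, Sg_sub I π τ w l hiwne, Sg_sub I π τ w l hiwne]
      rw [hvw]
      rw [if_neg (by omega : ¬ (1 ≤ 2*d ∧ 2*d ≤ (π (some (I.i w))).val - 1))]
      rw [if_neg (by omega : ¬ (1 ≤ (π (some (I.i w))).val ∧ (π (some (I.i w))).val ≤ (π (some (I.i w))).val - 1))]
      rw [if_neg (by omega : ¬ ((π (some (I.i w))).val ≤ 2*d ∧ 2*d ≤ (π none).val - 1))]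
      rw [if_pos (by omega : (π (some (I.i w))).val ≤ (π (some (I.i w))).val ∧ (π (some (I.i w))).val ≤ (π none).val - 1)]
      rw [if_pos (by omega : (π none).val + 1 ≤ 2*d ∧ 2*d ≤ 2*d)]
      rw [if_neg (by omega : ¬ ((π none).val + 1 ≤ (π (some (I.i w))).val ∧ (π (some (I.i w))).val ≤ 2*d))]
      have s2 : Sg π τ 1 ((π none).val - 1)
          = Sg π τ 1 ((π (some (I.i w))).val - 1)
            + Sg π τ ((π (some (I.i w))).val - 1 + 1) ((π none).val - 1) :=
        Sg_split π τ (by omega) (by omega)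
      have e5 : (π (some (I.i w))).val - 1 + 1 = (π (some (I.i w))).val := by omega
      rw [e5] at s2
      linarith [hbal, c3, s2]
    · -- p < q
      have hpq' : (π none).val < (π (some (I.i w))).val := by omega
      have hs'' : (π' none).val = (π none).val - 1 := by rw [hs', if_neg (by omega)]
      rw [hs'']
      rw [Sg_right π π' _ l _ hq1 hvl hmin hv']
      rw [Sg_right π π' _ l _ hq1 hvl hmin hv']
      rw [if_neg (by omega : ¬ (0 ≤ (π (some (I.i w))).val - 1 ∧ (π (some (I.i w))).val - 1 ≤ (π none).val - 1 - 1))]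
      rw [if_pos (by omega : (π none).val - 1 + 1 ≤ (π (some (I.i w))).val - 1 ∧ (π (some (I.i w))).val - 1 ≤ 2*d)]
      rw [if_neg hlno]
      have e1 : min ((π none).val - 1 - 1 + 1) ((π (some (I.i w))).val - 1)
          = (π none).val - 1 := by omega
      have e2 : max 0 ((π (some (I.i w))).val) = (π (some (I.i w))).val := by omega
      rw [e1, e2]
      rw [Sg_zero π _ (by omega : (π none).val - 1 - 1 < (π (some (I.i w))).val)]
      have e3 : min (2*d + 1) ((π (some (I.i w))).val - 1) = (π (some (I.i w))).val - 1 := by omega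
      have e4 : max ((π none).val - 1 + 1) ((π (some (I.i w))).val) = (π (some (I.i w))).val := by omega
      rw [e3, e4]
      rw [Sg_sub I π τ w l hiwne, Sg_sub I π τ w l hiwne, Sg_sub I π τ w l hiwne]
      rw [hvw]
      rw [if_neg (by omega : ¬ (1 ≤ 2*d ∧ 2*d ≤ (π none).val - 1))]
      rw [if_neg (by omega : ¬ (1 ≤ (π (some (I.i w))).val ∧ (π (some (I.i w))).val ≤ (π none).val - 1))]
      rw [if_neg (by omega : ¬ ((π none).val - 1 + 1 + 1 ≤ 2*d ∧ 2*d ≤ (π (some (I.i w))).val - 1))]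
      rw [if_neg (by omega : ¬ ((π none).val - 1 + 1 + 1 ≤ (π (some (I.i w))).val ∧ (π (some (I.i w))).val ≤ (π (some (I.i w))).val - 1))]
      rw [if_pos (by omega : (π (some (I.i w))).val ≤ 2*d ∧ 2*d ≤ 2*d)]
      rw [if_pos (by omega : (π (some (I.i w))).val ≤ (π (some (I.i w))).val ∧ (π (some (I.i w))).val ≤ 2*d)]
      have s2 : Sg π τ ((π none).val + 1) (2*d)
          = Sg π τ ((π none).val + 1) ((π (some (I.i w))).val - 1)
            + Sg π τ ((π (some (I.i w))).val - 1 + 1) (2*d) :=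
        Sg_split π τ (by omega) (by omega)
      have e5 : (π (some (I.i w))).val - 1 + 1 = (π (some (I.i w))).val := by omega
      rw [e5] at s2
      have e6 : (π none).val - 1 + 1 = (π none).val := by omega
      rw [e6]
      linarith [hbal, c3, s2]
  · -- positivity family
    intro k hk1 hk2
    rw [sum_pos_eq]
    rw [Fin.lt_def] at hk1
    have hkle : k.val ≤ 2*d := Fin.is_le _
    rcases Nat.lt_or_ge ((π (some (I.i w))).val) ((π none).val) with hpq | hpq
    · -- q < p
      have hs'' : (π' none).val = (π none).val := by rw [hs', if_pos (by omega)]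
      rw [hs''] at hk1 ⊢
      rw [Sg_right π π' _ l _ hq1 hvl hmin hv']
      rw [if_neg (by omega : ¬ ((π none).val + 1 ≤ (π (some (I.i w))).val - 1 ∧ (π (some (I.i w))).val - 1 ≤ k.val))]
      rw [Sg_zero π _ (by omega : min (k.val + 1) ((π (some (I.i w))).val - 1) < (π none).val + 1 + 1)]
      have e4 : max ((π none).val + 1) ((π (some (I.i w))).val) = (π none).val + 1 := by omega
      rw [e4]
      rw [Sg_sub I π τ w l hiwne, hvw]
      rw [if_neg (by omega : ¬ ((π none).val + 1 ≤ 2*d ∧ 2*d ≤ k.val))]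
      rw [if_neg (by omega : ¬ ((π none).val + 1 ≤ (π (some (I.i w))).val ∧ (π (some (I.i w))).val ≤ k.val))]
      have := hpos k.val (by omega) (by omega)
      linarith
    · -- p < q
      have hpq' : (π none).val < (π (some (I.i w))).val := by omega
      have hs'' : (π' none).val = (π none).val - 1 := by rw [hs', if_neg (by omega)]
      rw [hs''] at hk1 ⊢
      have e0 : (π none).val - 1 + 1 = (π none).val := by omega
      rw [e0]
      rw [Sg_right π π' _ l _ hq1 hvl hmin hv']
      by_cases hK1 : k.val + 2 ≤ (π (some (I.i w))).val
      · rw [if_neg (by omega : ¬ ((π none).val ≤ (π (some (I.i w))).val - 1 ∧ (π (some (I.i w))).val - 1 ≤ k.val))]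
        have e1 : min (k.val + 1) ((π (some (I.i w))).val - 1) = k.val + 1 := by omega
        have e2 : max ((π none).val) ((π (some (I.i w))).val) = (π (some (I.i w))).val := by omega
        rw [e1, e2]
        rw [Sg_zero π _ (by omega : k.val < (π (some (I.i w))).val)]
        rw [Sg_sub I π τ w l hiwne, hvw]
        rw [if_neg (by omega : ¬ ((π none).val + 1 ≤ 2*d ∧ 2*d ≤ k.val + 1))]
        rw [if_neg (by omega : ¬ ((π none).val + 1 ≤ (π (some (I.i w))).val ∧ (π (some (I.i w))).val ≤ k.val + 1))]
        have := hpos (k.val + 1) (by omega) (by omega)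
        linarith
      · by_cases hK2 : k.val + 1 = (π (some (I.i w))).val
        · -- tricky branch k = q - 1
          rw [if_pos (by omega : (π none).val ≤ (π (some (I.i w))).val - 1 ∧ (π (some (I.i w))).val - 1 ≤ k.val)]
          rw [if_neg hlno]
          have e1 : min (k.val + 1) ((π (some (I.i w))).val - 1) = (π (some (I.i w))).val - 1 := by omega
          have e2 : max ((π none).val) ((π (some (I.i w))).val) = (π (some (I.i w))).val := by omega
          rw [e1, e2]
          rw [Sg_zero π _ (by omega : k.val < (π (some (I.i w))).val)]
          rw [Sg_sub I π τ w l hiwne, hvw]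
          rw [if_neg (by omega : ¬ ((π none).val + 1 ≤ 2*d ∧ 2*d ≤ (π (some (I.i w))).val - 1))]
          rw [if_neg (by omega : ¬ ((π none).val + 1 ≤ (π (some (I.i w))).val ∧ (π (some (I.i w))).val ≤ (π (some (I.i w))).val - 1))]
          have c1 : Sg π τ ((π none).val + 1) ((π (some (I.i w))).val)
              = Sg π τ ((π none).val + 1) ((π (some (I.i w))).val - 1) + τ w := by
            rw [Sg_split π τ (j := (π none).val + 1) (m := (π (some (I.i w))).val - 1)
              (k := (π (some (I.i w))).val) (by omega) (by omega)]
            have e : (π (some (I.i w))).val - 1 + 1 = (π (some (I.i w))).val := by omega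
            rw [e, hSq]
          have c4 := hneg 1 one_pos (by omega)
          have c5 := hpos (2*d - 1) (by omega) (by omega)
          have c6 := hpos ((π (some (I.i w))).val) (by omega) (by omega)
          linarith [hbal, c1, c2, c3]
        · by_cases hK3 : k.val = (π (some (I.i w))).val
          · rw [if_pos (by omega : (π none).val ≤ (π (some (I.i w))).val - 1 ∧ (π (some (I.i w))).val - 1 ≤ k.val)]
            rw [if_neg hlno]
            have e1 : min (k.val + 1) ((π (some (I.i w))).val - 1) = (π (some (I.i w))).val - 1 := by omega
            have e2 : max ((π none).val) ((π (some (I.i w))).val) = (π (some (I.i w))).val := by omega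
            rw [e1, e2, hK3]
            rw [Sg_sub I π τ w l hiwne, hvw]
            rw [if_neg (by omega : ¬ ((π none).val + 1 ≤ 2*d ∧ 2*d ≤ (π (some (I.i w))).val - 1))]
            rw [if_neg (by omega : ¬ ((π none).val + 1 ≤ (π (some (I.i w))).val ∧ (π (some (I.i w))).val ≤ (π (some (I.i w))).val - 1))]
            rw [Sg_sub I π τ w l hiwne, hvw]
            rw [if_neg (by omega : ¬ ((π (some (I.i w))).val ≤ 2*d ∧ 2*d ≤ (π (some (I.i w))).val))]
            rw [if_pos (by omega : (π (some (I.i w))).val ≤ (π (some (I.i w))).val ∧ (π (some (I.i w))).val ≤ (π (some (I.i w))).val)]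
            rw [hSq]
            have c1 : Sg π τ ((π none).val + 1) ((π (some (I.i w))).val)
                = Sg π τ ((π none).val + 1) ((π (some (I.i w))).val - 1) + τ w := by
              rw [Sg_split π τ (j := (π none).val + 1) (m := (π (some (I.i w))).val - 1)
                (k := (π (some (I.i w))).val) (by omega) (by omega)]
              have e : (π (some (I.i w))).val - 1 + 1 = (π (some (I.i w))).val := by omega
              rw [e, hSq]
            have c6 := hpos ((π (some (I.i w))).val) (by omega) (by omega)
            linarith
          · -- k ≥ q + 1
            have hK4 : (π (some (I.i w))).val + 1 ≤ k.val := by omega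
            rw [if_pos (by omega : (π none).val ≤ (π (some (I.i w))).val - 1 ∧ (π (some (I.i w))).val - 1 ≤ k.val)]
            rw [if_neg hlno]
            have e1 : min (k.val + 1) ((π (some (I.i w))).val - 1) = (π (some (I.i w))).val - 1 := by omega
            have e2 : max ((π none).val) ((π (some (I.i w))).val) = (π (some (I.i w))).val := by omega
            rw [e1, e2]
            rw [Sg_sub I π τ w l hiwne, hvw]
            rw [if_neg (by omega : ¬ ((π none).val + 1 ≤ 2*d ∧ 2*d ≤ (π (some (I.i w))).val - 1))]
            rw [if_neg (by omega : ¬ ((π none).val + 1 ≤ (π (some (I.i w))).val ∧ (π (some (I.i w))).val ≤ (π (some (I.i w))).val - 1))]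
            rw [Sg_sub I π τ w l hiwne, hvw]
            rw [if_neg (by omega : ¬ ((π (some (I.i w))).val ≤ 2*d ∧ 2*d ≤ k.val))]
            rw [if_pos (by omega : (π (some (I.i w))).val ≤ (π (some (I.i w))).val ∧ (π (some (I.i w))).val ≤ k.val)]
            have s2 : Sg π τ ((π none).val + 1) k.val
                = Sg π τ ((π none).val + 1) ((π (some (I.i w))).val - 1)
                  + Sg π τ ((π (some (I.i w))).val - 1 + 1) k.val :=
              Sg_split π τ (by omega) (by omega)
            have e5 : (π (some (I.i w))).val - 1 + 1 = (π (some (I.i w))).val := by omega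
            rw [e5] at s2
            have := hpos k.val (by omega) (by omega)
            linarith
  · -- negativity family
    intro k hk0 hk1
    have hp'1 : 1 ≤ (π' none).val := by rw [hs']; split_ifs <;> omega
    rw [sum_neg_eq π' _ hp'1]
    rw [Fin.lt_def] at hk1
    rcases Nat.lt_or_ge ((π (some (I.i w))).val) ((π none).val) with hpq | hpq
    · -- q < p
      have hs'' : (π' none).val = (π none).val := by rw [hs', if_pos (by omega)]
      rw [hs''] at hk1 ⊢
      rw [Sg_right π π' _ l _ hq1 hvl hmin hv']
      by_cases hK1 : (π (some (I.i w))).val + 1 ≤ k.val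
      · rw [if_neg (by omega : ¬ (k.val ≤ (π (some (I.i w))).val - 1 ∧ (π (some (I.i w))).val - 1 ≤ (π none).val - 1))]
        rw [Sg_zero π _ (by omega : min ((π none).val - 1 + 1) ((π (some (I.i w))).val - 1) < k.val + 1)]
        have e2 : max k.val ((π (some (I.i w))).val) = k.val := by omega
        rw [e2]
        rw [Sg_sub I π τ w l hiwne, hvw]
        rw [if_neg (by omega : ¬ (k.val ≤ 2*d ∧ 2*d ≤ (π none).val - 1))]
        rw [if_neg (by omega : ¬ (k.val ≤ (π (some (I.i w))).val ∧ (π (some (I.i w))).val ≤ (π none).val - 1))]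
        have := hneg k.val (by omega) (by omega)
        linarith
      · by_cases hK2 : k.val = (π (some (I.i w))).val
        · -- tricky branch k = q
          rw [if_neg (by omega : ¬ (k.val ≤ (π (some (I.i w))).val - 1 ∧ (π (some (I.i w))).val - 1 ≤ (π none).val - 1))]
          rw [Sg_zero π _ (by omega : min ((π none).val - 1 + 1) ((π (some (I.i w))).val - 1) < k.val + 1)]
          have e2 : max k.val ((π (some (I.i w))).val) = (π (some (I.i w))).val := by omega
          rw [e2]
          rw [Sg_sub I π τ w l hiwne, hvw]
          rw [if_neg (by omega : ¬ ((π (some (I.i w))).val ≤ 2*d ∧ 2*d ≤ (π none).val - 1))]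
          rw [if_pos (by omega : (π (some (I.i w))).val ≤ (π (some (I.i w))).val ∧ (π (some (I.i w))).val ≤ (π none).val - 1)]
          have c1 : Sg π τ ((π (some (I.i w))).val) ((π none).val - 1)
              = τ w + Sg π τ ((π (some (I.i w))).val + 1) ((π none).val - 1) := by
            rw [Sg_split π τ (j := (π (some (I.i w))).val) (m := (π (some (I.i w))).val)
              (k := (π none).val - 1) (by omega) (by omega), hSq]
          have c6 : Sg π τ ((π (some (I.i w))).val + 1) ((π none).val - 1) ≤ 0 := by
            rcases Nat.lt_or_ge ((π (some (I.i w))).val + 1) ((π none).val) with h | h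
            · exact le_of_lt (hneg ((π (some (I.i w))).val + 1) (by omega) h)
            · rw [Sg_zero π τ (by omega)]
          have c4 := hneg 1 one_pos (by omega)
          have c5 := hpos (2*d - 1) (by omega) (by omega)
          linarith [hbal, c1, c2, c3]
        · -- k ≤ q - 1
          have hK3 : k.val ≤ (π (some (I.i w))).val - 1 := by omega
          rw [if_pos (by omega : k.val ≤ (π (some (I.i w))).val - 1 ∧ (π (some (I.i w))).val - 1 ≤ (π none).val - 1)]
          rw [if_neg hlno]
          have e1 : min ((π none).val - 1 + 1) ((π (some (I.i w))).val - 1)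
              = (π (some (I.i w))).val - 1 := by omega
          have e2 : max k.val ((π (some (I.i w))).val) = (π (some (I.i w))).val := by omega
          rw [e1, e2]
          rw [Sg_sub I π τ w l hiwne, hvw]
          rw [if_neg (by omega : ¬ (k.val + 1 ≤ 2*d ∧ 2*d ≤ (π (some (I.i w))).val - 1))]
          rw [if_neg (by omega : ¬ (k.val + 1 ≤ (π (some (I.i w))).val ∧ (π (some (I.i w))).val ≤ (π (some (I.i w))).val - 1))]
          rw [Sg_sub I π τ w l hiwne, hvw]
          rw [if_neg (by omega : ¬ ((π (some (I.i w))).val ≤ 2*d ∧ 2*d ≤ (π none).val - 1))]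
          rw [if_pos (by omega : (π (some (I.i w))).val ≤ (π (some (I.i w))).val ∧ (π (some (I.i w))).val ≤ (π none).val - 1)]
          have s2 : Sg π τ (k.val + 1) ((π none).val - 1)
              = Sg π τ (k.val + 1) ((π (some (I.i w))).val - 1)
                + Sg π τ ((π (some (I.i w))).val - 1 + 1) ((π none).val - 1) :=
            Sg_split π τ (by omega) (by omega)
          have e5 : (π (some (I.i w))).val - 1 + 1 = (π (some (I.i w))).val := by omega
          rw [e5] at s2
          have := hneg (k.val + 1) (by omega) (by omega)
          linarith
    · -- p < q
      have hpq' : (π none).val < (π (some (I.i w))).val := by omega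
      have hs'' : (π' none).val = (π none).val - 1 := by rw [hs', if_neg (by omega)]
      rw [hs''] at hk1 ⊢
      rw [Sg_right π π' _ l _ hq1 hvl hmin hv']
      rw [if_neg (by omega : ¬ (k.val ≤ (π (some (I.i w))).val - 1 ∧ (π (some (I.i w))).val - 1 ≤ (π none).val - 1 - 1))]
      have e1 : min ((π none).val - 1 - 1 + 1) ((π (some (I.i w))).val - 1)
          = (π none).val - 1 := by omega
      have e2 : max k.val ((π (some (I.i w))).val) = (π (some (I.i w))).val := by omega
      rw [e1, e2]
      rw [Sg_zero π _ (by omega : (π none).val - 1 - 1 < (π (some (I.i w))).val)]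
      rw [Sg_sub I π τ w l hiwne, hvw]
      rw [if_neg (by omega : ¬ (k.val + 1 ≤ 2*d ∧ 2*d ≤ (π none).val - 1))]
      rw [if_neg (by omega : ¬ (k.val + 1 ≤ (π (some (I.i w))).val ∧ (π (some (I.i w))).val ≤ (π none).val - 1))]
      have := hneg (k.val + 1) (by omega) (by omega)
      linarith

/-- If `γ` is an arrow from `π` to `π'`, then `(B*_γ)⁻¹·Θ_π ⊆ Θ_{π'}`: the open cone of
admissible suspension data is forward-invariant under the inverse transpose of the
transition matrix. -/
theorem theta_forward_invariant
    {d : ℕ} (I : Inv d) (a : Arrow d I) (τ : Letter d → ℝ)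
    (hτ : MemTheta I a.src τ) :
    MemTheta I a.dst (arrowBtInv I a τ) := by
  rcases a.ok with ⟨hop, hw, hl⟩ | ⟨hop, hl, hw⟩
  · exact left_main I a.src a.dst τ hop a.winner a.loser hw hl hτ
  · exact right_main I a.src a.dst τ hop a.winner a.loser hl hw hτ

end Rauzy
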